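/- With f as above (f₁ = 2K(1-|x|²)/((K+1)|e₁-x|²), f₂ = 4x₂/((K+1)|e₁-x|²)), the first coordinate f₁ belongs to ℍ¹(B²,ℝ), i.e. sup_{0<r<1} ∫_{S¹} |f₁(rζ)| dσ(ζ) < ∞, but f = (f₁,f₂) does not belong to ℍ¹(B²,ℝ²). -/

import Mathlib

open scoped BigOperators
open MeasureTheory

/-- First coordinate function: `f₁ = 2K(1-|x|²)/((K+1)|e₁-x|²)`. -/
noncomputable def g₁ (K : ℝ) (x : EuclideanSpace ℝ (Fin 2)) : ℝ :=
  2 * K * (1 - (x 0) ^ 2 - (x 1) ^ 2) / ((K + 1) * ((1 - x 0) ^ 2 + (x 1) ^ 2))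

/-- Second coordinate function: `f₂ = 4x₂/((K+1)|e₁-x|²)`. -/
noncomputable def g₂ (K : ℝ) (x : EuclideanSpace ℝ (Fin 2)) : ℝ :=
  4 * (x 1) / ((K + 1) * ((1 - x 0) ^ 2 + (x 1) ^ 2))

open scoped Real
open Real Set Metric

local notation "E2" => EuclideanSpace ℝ (Fin 2)

noncomputable def eqv : E2 ≃ᵐ ℝ × ℝ :=
  (MeasurableEquiv.toLp 2 (Fin 2 → ℝ)).symm.trans (MeasurableEquiv.finTwoArrow)

lemma eqv_symm_apply_zero (p : ℝ × ℝ) : (eqv.symm p) 0 = p.1 := rfl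
lemma eqv_symm_apply_one (p : ℝ × ℝ) : (eqv.symm p) 1 = p.2 := rfl

lemma eqv_mp : MeasurePreserving eqv volume volume :=
  (volume_preserving_finTwoArrow ℝ).comp (EuclideanSpace.volume_preserving_symm_measurableEquiv_toLp (Fin 2))

noncomputable def cpt (θ : ℝ) : E2 := eqv.symm (Real.cos θ, Real.sin θ)

lemma norm_eqv_symm (p : ℝ × ℝ) : ‖eqv.symm p‖ = Real.sqrt (p.1 ^ 2 + p.2 ^ 2) := by
  rw [EuclideanSpace.norm_eq]
  congr 1
  simp [Fin.sum_univ_two, eqv_symm_apply_zero, eqv_symm_apply_one, sq_abs]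

noncomputable def ind : ℝ → ℝ := Set.indicator (Set.Ioo (0:ℝ) 1) (fun _ => 2)

lemma ind_integral : ∫ x in Set.Ioi (0:ℝ), x * ind x = 1 := by
  have h : ∀ x : ℝ, x * ind x = Set.indicator (Set.Ioo (0:ℝ) 1) (fun y => y * 2) x := by
    intro x
    by_cases hx : x ∈ Set.Ioo (0:ℝ) 1 <;> simp [ind, hx]
  simp_rw [h]
  rw [setIntegral_indicator measurableSet_Ioo, Set.inter_eq_right.mpr (Set.Ioo_subset_Ioi_self),
    ← integral_Ioc_eq_integral_Ioo, ← intervalIntegral.integral_of_le zero_le_one]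
  simp [intervalIntegral.integral_mul_const, integral_id]

lemma ind_volumeIoiPow : ∫ r : Set.Ioi (0:ℝ), ind r.1 ∂(Measure.volumeIoiPow 1) = 1 := by
  rw [Measure.volumeIoiPow]
  simp only [ENNReal.ofReal]
  rw [integral_withDensity_eq_integral_smul
    ((measurable_subtype_coe.pow_const 1).real_toNNReal),
    integral_subtype_comap measurableSet_Ioi (fun a : ℝ => (a ^ 1).toNNReal • ind a)]
  rw [← ind_integral]
  refine setIntegral_congr_fun measurableSet_Ioi fun x hx => ?_
  rw [NNReal.smul_def, Real.coe_toNNReal _ (pow_nonneg (le_of_lt hx) _), pow_one, smul_eq_mul]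

/-- Transfer an integral over the unit circle w.r.t. `volume.toSphere` to a θ-integral. -/
lemma sphere_transfer (φ : E2 → ℝ) :
    (∫ ζ : sphere (0 : E2) 1, φ ζ ∂((volume : Measure E2).toSphere))
      = ∫ θ in Set.Ioo (-π) π, φ (cpt θ) := by
  set μ : Measure E2 := volume
  set F : E2 → ℝ := fun x => φ (‖x‖⁻¹ • x) * ind ‖x‖ with hF
  have hdim : Module.finrank ℝ E2 = 2 := finrank_euclideanSpace_fin
  have hA : ∫ x, F x ∂μ = ∫ ζ : sphere (0 : E2) 1, φ ζ ∂μ.toSphere := by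
    have e0 : ∫ x, F x ∂μ = ∫ x : ({(0:E2)}ᶜ : Set E2), F x.1 ∂(μ.comap Subtype.val) := by
      rw [integral_subtype_comap (measurableSet_singleton (0:E2)).compl F,
        MeasureTheory.restrict_compl_singleton]
    rw [e0]
    have h1 : ∀ x : ({(0:E2)}ᶜ : Set E2), F x.1 =
        (fun p : sphere (0:E2) 1 × Set.Ioi (0:ℝ) => φ p.1.1 * ind p.2.1)
          (homeomorphUnitSphereProd E2 x) := by
      intro x; simp [F]
    rw [integral_congr_ae (Filter.EventuallyEq.of_eq (funext h1))]
    rw [μ.measurePreserving_homeomorphUnitSphereProd.integral_comp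
        (Homeomorph.measurableEmbedding _)
        (fun p : sphere (0:E2) 1 × Set.Ioi (0:ℝ) => φ p.1.1 * ind p.2.1)]
    rw [integral_prod_mul (μ := μ.toSphere) (ν := Measure.volumeIoiPow (Module.finrank ℝ E2 - 1))
      (fun ζ : sphere (0:E2) 1 => φ ζ.1) (fun r : Set.Ioi (0:ℝ) => ind r.1)]
    rw [hdim]
    norm_num [ind_volumeIoiPow]
  have hB : ∫ x, F x ∂μ = ∫ θ in Set.Ioo (-π) π, φ (cpt θ) := by
    rw [← (eqv_mp.symm eqv).integral_comp eqv.symm.measurableEmbedding F,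
      ← integral_comp_polarCoord_symm (fun p => F (eqv.symm p))]
    have h2 : ∀ p ∈ polarCoord.target,
        p.1 • F (eqv.symm (polarCoord.symm p))
          = (fun r => r * ind r) p.1 * (fun θ => φ (cpt θ)) p.2 := by
      rintro ⟨r, θ⟩ ⟨hr, hθ⟩
      simp only [polarCoord_symm_apply]
      have hx : eqv.symm (r * Real.cos θ, r * Real.sin θ) = r • cpt θ := by
        ext i
        fin_cases i <;>
          simp [cpt, PiLp.smul_apply, smul_eq_mul, eqv_symm_apply_zero, eqv_symm_apply_one]
      have hn1 : ‖cpt θ‖ = 1 := by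
        rw [cpt, norm_eqv_symm]
        simp [Real.cos_sq_add_sin_sq]
      have hrpos : (0:ℝ) < r := hr
      have hnorm : ‖r • cpt θ‖ = r := by
        rw [norm_smul, hn1, Real.norm_eq_abs, abs_of_pos hrpos, mul_one]
      rw [hx, hF]
      simp only [hnorm]
      rw [smul_smul, inv_mul_cancel₀ hrpos.ne', one_smul, smul_eq_mul]
      ring
    have hmt : MeasurableSet polarCoord.target := by
      rw [polarCoord_target]; exact measurableSet_Ioi.prod measurableSet_Ioo
    rw [setIntegral_congr_fun hmt h2, polarCoord_target, Measure.volume_eq_prod,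
      setIntegral_prod_mul (fun r : ℝ => r * ind r) (fun θ : ℝ => φ (cpt θ)) (Set.Ioi 0)
        (Set.Ioo (-π) π), ind_integral, one_mul]
  rw [← hA]; exact hB

lemma smul_cpt_zero (r θ : ℝ) : (r • cpt θ) 0 = r * Real.cos θ := rfl
lemma smul_cpt_one (r θ : ℝ) : (r • cpt θ) 1 = r * Real.sin θ := rfl

lemma eval₁ (K r θ : ℝ) :
    g₁ K (r • cpt θ) = 2*K*(1-r^2) / ((K+1)*(1 - 2*r*Real.cos θ + r^2)) := by
  have h := Real.sin_sq_add_cos_sq θ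
  rw [g₁, smul_cpt_zero, smul_cpt_one]
  congr 1
  · linear_combination (-(2:ℝ)*K*r^2) * h
  · linear_combination ((K+1)*r^2) * h

lemma eval₂ (K r θ : ℝ) :
    g₂ K (r • cpt θ) = 4*(r*Real.sin θ) / ((K+1)*(1 - 2*r*Real.cos θ + r^2)) := by
  have h := Real.sin_sq_add_cos_sq θ
  rw [g₂, smul_cpt_zero, smul_cpt_one]
  congr 1
  linear_combination ((K+1)*r^2) * h

lemma one_sub_cos_ge {θ : ℝ} (h0 : 0 ≤ θ) (hπ : θ ≤ π) : 2*θ^2/π^2 ≤ 1 - Real.cos θ := by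
  have hpi := Real.pi_pos
  have hs : θ/π ≤ Real.sin (θ/2) := by
    have h := Real.mul_le_sin (x := θ/2) (by linarith) (by linarith)
    have h2 : 2/π * (θ/2) = θ/π := by field_simp
    linarith [h2 ▸ h]
  have hcos : Real.cos θ = 1 - 2 * Real.sin (θ/2)^2 := by
    have h2 := Real.cos_two_mul (θ/2)
    have hsc := Real.sin_sq_add_cos_sq (θ/2)
    rw [show 2*(θ/2) = θ by ring] at h2
    linarith
  have h1 : (θ/π)^2 ≤ Real.sin (θ/2)^2 := by
    nlinarith [div_nonneg h0 hpi.le]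
  have h2 : 2*θ^2/π^2 = 2*(θ/π)^2 := by field_simp
  linarith

lemma D_pos {r : ℝ} (h0 : 0 ≤ r) (h1 : r < 1) (θ : ℝ) :
    0 < 1 - 2*r*Real.cos θ + r^2 := by
  nlinarith [Real.cos_le_one θ, sq_nonneg (1-r), mul_nonneg h0 (sub_nonneg.mpr (Real.cos_le_one θ))]

lemma poisson_bound {r : ℝ} (h0 : 0 ≤ r) (h1 : r < 1) :
    ∫ θ in Set.Ioo (-π) π, (1-r^2)/(1-2*r*Real.cos θ+r^2) ≤ 6*π + 30 := by
  have hpi := Real.pi_pos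
  have hpi3 := Real.pi_gt_three
  set P : ℝ → ℝ := fun θ => (1-r^2)/(1-2*r*Real.cos θ+r^2) with hP
  have hcont : Continuous P := by
    apply continuous_const.div (by continuity)
    exact fun θ => (D_pos h0 h1 θ).ne'
  have hint : ∀ a b : ℝ, IntervalIntegrable P volume a b := fun a b =>
    hcont.intervalIntegrable a b
  have hIoo : ∫ θ in Set.Ioo (-π) π, P θ = ∫ θ in (-π)..π, P θ := by
    rw [intervalIntegral.integral_of_le (by linarith), integral_Ioc_eq_integral_Ioo]
  have hfold : ∫ θ in (-π)..π, P θ = 2 * ∫ θ in (0:ℝ)..π, P θ := by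
    have hneg : ∫ x in (-π)..(0:ℝ), P x = ∫ x in (0:ℝ)..π, P x := by
      have h := intervalIntegral.integral_comp_neg (a := (0:ℝ)) (b := π) P
      rw [neg_zero] at h
      rw [← h]
      apply intervalIntegral.integral_congr
      intro x _
      simp [hP, Real.cos_neg]
    rw [← intervalIntegral.integral_add_adjacent_intervals (hint (-π) 0) (hint 0 π), hneg]
    ring
  rw [hIoo, hfold]
  by_cases hr : r ≤ 1/2
  · have hb : ∀ θ ∈ Set.Icc (0:ℝ) π, P θ ≤ 3 := by
      intro θ _
      rw [hP, div_le_iff₀ (D_pos h0 h1 θ)]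
      nlinarith [Real.cos_le_one θ, mul_nonneg h0 (sub_nonneg.mpr (Real.cos_le_one θ))]
    have := intervalIntegral.integral_mono_on hpi.le (hint 0 π)
      (intervalIntegrable_const (c := (3:ℝ))) hb
    rw [intervalIntegral.integral_const] at this
    simp only [smul_eq_mul] at this
    linarith
  · push_neg at hr
    set δ : ℝ := 1 - r with hδ
    have hδ0 : 0 < δ := by simp [hδ]; linarith
    have hδπ : δ ≤ π := by linarith
    have hsplit : ∫ θ in (0:ℝ)..π, P θ = (∫ θ in (0:ℝ)..δ, P θ) + ∫ θ in δ..π, P θ :=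
      (intervalIntegral.integral_add_adjacent_intervals (hint 0 δ) (hint δ π)).symm
    have hmid : ∫ θ in (0:ℝ)..δ, P θ ≤ 2 := by
      have hb : ∀ θ ∈ Set.Icc (0:ℝ) δ, P θ ≤ 2/δ := by
        intro θ _
        rw [hP, div_le_div_iff₀ (D_pos h0 h1 θ) hδ0]
        nlinarith [Real.cos_le_one θ, mul_nonneg h0 (sub_nonneg.mpr (Real.cos_le_one θ)),
          pow_nonneg (sub_nonneg.mpr h1.le) 3]
      have := intervalIntegral.integral_mono_on hδ0.le (hint 0 δ)
        (intervalIntegrable_const (c := (2/δ : ℝ))) hb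
      rw [intervalIntegral.integral_const] at this
      simp only [smul_eq_mul, sub_zero] at this
      rw [mul_div_assoc'] at this
      calc ∫ θ in (0:ℝ)..δ, P θ ≤ δ * 2 / δ := this
        _ = 2 := by field_simp
    have htail : ∫ θ in δ..π, P θ ≤ π^2 := by
      have hb : ∀ θ ∈ Set.Icc δ π, P θ ≤ δ * π^2 * θ^(-2:ℤ) := by
        intro θ hθ
        have hθ0 : 0 < θ := lt_of_lt_of_le hδ0 hθ.1
        have hzp : θ^(-2:ℤ) = (θ^2)⁻¹ := by
          rw [zpow_neg, zpow_two, sq]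
        have hθπ : θ ≤ π := hθ.2
        have h1c : 2*θ^2/π^2 ≤ 1 - Real.cos θ := one_sub_cos_ge hθ0.le hθπ
        have h1c' : 2*θ^2 ≤ (1 - Real.cos θ)*π^2 := by
          rw [div_le_iff₀ (by positivity)] at h1c
          linarith
        have hD2 : 1 - Real.cos θ ≤ 1 - 2*r*Real.cos θ + r^2 := by
          nlinarith [sq_nonneg (1-r), sub_nonneg.mpr (Real.cos_le_one θ)]
        have hrw : δ * π^2 * θ^(-2:ℤ) = (δ * π^2)/(θ^2) := by
          rw [hzp]; ring
        rw [hP, hrw, div_le_div_iff₀ (D_pos h0 h1 θ) (by positivity)]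
        have e1 : (1-r^2)*θ^2 ≤ 2*δ*θ^2 := by
          have : 1 - r^2 ≤ 2*δ := by nlinarith [sq_nonneg (1-r)]
          nlinarith [sq_nonneg θ]
        have e2 : δ*(2*θ^2) ≤ δ*((1 - Real.cos θ)*π^2) :=
          mul_le_mul_of_nonneg_left h1c' hδ0.le
        have e3 : (δ*π^2)*(1 - Real.cos θ) ≤ (δ*π^2)*(1 - 2*r*Real.cos θ + r^2) :=
          mul_le_mul_of_nonneg_left hD2 (by positivity)
        nlinarith [e1, e2, e3]
      have hbi : IntervalIntegrable (fun θ : ℝ => δ * π^2 * θ^(-2:ℤ)) volume δ π :=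
        (intervalIntegral.intervalIntegrable_zpow
          (Or.inr (Set.notMem_uIcc_of_lt hδ0 hpi))).const_mul _
      have hmono := intervalIntegral.integral_mono_on hδπ (hint δ π) hbi hb
      have hz : ∫ θ in δ..π, θ^(-2:ℤ) = δ⁻¹ - π⁻¹ := by
        rw [integral_zpow (Or.inr ⟨by norm_num, Set.notMem_uIcc_of_lt hδ0 hpi⟩)]
        norm_num
        ring
      rw [intervalIntegral.integral_const_mul, hz] at hmono
      have : δ * π^2 * (δ⁻¹ - π⁻¹) ≤ π^2 := by
        have hc : δ * π^2 * (δ⁻¹ - π⁻¹) = π^2 - δ*π := by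
          field_simp
        rw [hc]
        nlinarith [mul_pos hδ0 hpi]
      linarith
    rw [hsplit]
    nlinarith [Real.pi_lt_d2]

set_option maxHeartbeats 1000000 in
/-- For fixed `K ≥ 1`, the first coordinate `f₁` of the map `f = (f₁,f₂)` belongs to
`ℍ¹(B²,ℝ)`, i.e. its integral means over circles of radius `r < 1` are uniformly bounded,
but `f` itself does not belong to `ℍ¹(B²,ℝ²)`. -/
theorem stmt13 (K : ℝ) (hK : 1 ≤ K) :
    (∃ C : ℝ, ∀ r : ℝ, 0 < r → r < 1 →
      (∫ ζ : Metric.sphere (0 : EuclideanSpace ℝ (Fin 2)) 1,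
          |g₁ K (r • (ζ : EuclideanSpace ℝ (Fin 2)))|
            ∂((volume : Measure (EuclideanSpace ℝ (Fin 2))).toSphere)) ≤ C) ∧
    ¬ (∃ C : ℝ, ∀ r : ℝ, 0 < r → r < 1 →
      (∫ ζ : Metric.sphere (0 : EuclideanSpace ℝ (Fin 2)) 1,
          Real.sqrt ((g₁ K (r • (ζ : EuclideanSpace ℝ (Fin 2)))) ^ 2 +
            (g₂ K (r • (ζ : EuclideanSpace ℝ (Fin 2)))) ^ 2)
            ∂((volume : Measure (EuclideanSpace ℝ (Fin 2))).toSphere)) ≤ C) := by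
  have hK1 : (0:ℝ) < K + 1 := by linarith
  have hpi := Real.pi_pos
  have hpi3 := Real.pi_gt_three
  constructor
  · refine ⟨2*K/(K+1) * (6*π + 30), fun r hr0 hr1 => ?_⟩
    calc (∫ ζ : sphere (0 : E2) 1, |g₁ K (r • (ζ : E2))| ∂((volume : Measure E2).toSphere))
        = ∫ θ in Set.Ioo (-π) π, |g₁ K (r • cpt θ)| :=
          sphere_transfer (fun x => |g₁ K (r • x)|)
      _ = ∫ θ in Set.Ioo (-π) π, (2*K/(K+1)) * ((1-r^2)/(1-2*r*Real.cos θ+r^2)) := by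
          refine integral_congr_ae (Filter.Eventually.of_forall fun θ => ?_)
          show |g₁ K (r • cpt θ)| = 2*K/(K+1) * ((1-r^2)/(1-2*r*Real.cos θ+r^2))
          have h1r2 : (0:ℝ) ≤ 1 - r^2 := by
            nlinarith [mul_nonneg (sub_nonneg.mpr hr1.le) (show (0:ℝ) ≤ 1+r by linarith)]
          have hnum : (0:ℝ) ≤ 2*K*(1-r^2) := by nlinarith
          rw [eval₁ K r θ, abs_of_nonneg (div_nonneg hnum
            (mul_nonneg hK1.le (D_pos hr0.le hr1 θ).le)), div_mul_div_comm]
      _ = (2*K/(K+1)) * ∫ θ in Set.Ioo (-π) π, (1-r^2)/(1-2*r*Real.cos θ+r^2) :=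
          integral_const_mul _ _
      _ ≤ 2*K/(K+1) * (6*π + 30) := by
          apply mul_le_mul_of_nonneg_left (poisson_bound hr0.le hr1)
          positivity
  · rintro ⟨C, hC⟩
    set δ : ℝ := Real.exp (-(2*(K+1)*(|C|+1) + 2)) with hδdef
    have hδpos : 0 < δ := Real.exp_pos _
    have h2K : (0:ℝ) < 2*(K+1) := by linarith
    have hCabs : (0:ℝ) ≤ |C| := abs_nonneg C
    have hδ14 : δ < 1/4 := by
      have he2 : Real.exp 2 = Real.exp 1 * Real.exp 1 := by
        rw [← Real.exp_add]; norm_num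
      have h1 : δ ≤ Real.exp (-2) := by
        apply Real.exp_le_exp.mpr
        nlinarith
      have h4 : (4:ℝ) < Real.exp 2 := by
        nlinarith [Real.exp_one_gt_d9]
      have h2 : Real.exp (-2) < 1/4 := by
        rw [Real.exp_neg]
        calc (Real.exp 2)⁻¹ < (4:ℝ)⁻¹ := inv_strictAnti₀ (by norm_num) h4
          _ = 1/4 := by norm_num
      linarith
    set r : ℝ := 1 - δ with hrdef
    have hr0 : 0 < r := by rw [hrdef]; linarith
    have hr1 : r < 1 := by rw [hrdef]; linarith
    have hrhalf : 1/2 ≤ r := by rw [hrdef]; linarith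
    have key := hC r hr0 hr1
    have ht := sphere_transfer (fun x => Real.sqrt ((g₁ K (r • x))^2 + (g₂ K (r • x))^2))
    rw [ht] at key
    set S : ℝ → ℝ := fun θ => Real.sqrt ((2*K*(1-r^2) / ((K+1)*(1-2*r*Real.cos θ+r^2)))^2
      + (4*(r*Real.sin θ) / ((K+1)*(1-2*r*Real.cos θ+r^2)))^2) with hS
    have hkey2 : ∫ θ in Set.Ioo (-π) π, S θ ≤ C := by
      refine le_trans (le_of_eq ?_) key
      refine integral_congr_ae (Filter.Eventually.of_forall fun θ => ?_)
      show S θ = Real.sqrt ((g₁ K (r • cpt θ))^2 + (g₂ K (r • cpt θ))^2)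
      rw [hS, eval₁, eval₂]
    have hcden : Continuous (fun θ : ℝ => (K+1)*(1-2*r*Real.cos θ+r^2)) :=
      continuous_const.mul
        (((continuous_const.sub (continuous_const.mul Real.continuous_cos)).add
          continuous_const))
    have hcontS : Continuous S := by
      rw [hS]
      apply Continuous.sqrt
      apply Continuous.add
      · apply Continuous.pow
        exact continuous_const.div hcden
          (fun θ => (mul_pos hK1 (D_pos hr0.le hr1 θ)).ne')
      · apply Continuous.pow
        exact Continuous.div (continuous_const.mul
            (continuous_const.mul Real.continuous_sin)) hcden
          (fun θ => (mul_pos hK1 (D_pos hr0.le hr1 θ)).ne')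
    have hIntS : IntegrableOn S (Set.Ioo (-π) π) :=
      (hcontS.continuousOn.integrableOn_Icc (a := -π) (b := π)).mono_set Set.Ioo_subset_Icc_self
    have hsub : Set.Ioc δ (1/2 : ℝ) ⊆ Set.Ioo (-π) π := by
      intro x hx
      exact ⟨by linarith [hx.1], by linarith [hx.2]⟩
    have hmono1 : ∫ θ in Set.Ioc δ (1/2:ℝ), S θ ≤ ∫ θ in Set.Ioo (-π) π, S θ :=
      setIntegral_mono_set hIntS (Filter.Eventually.of_forall fun θ => Real.sqrt_nonneg _)
        (HasSubset.Subset.eventuallyLE hsub)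
    set L : ℝ → ℝ := fun θ => (2*(K+1))⁻¹ * θ⁻¹ with hL
    have hδhalf : δ < 1/2 := by linarith
    have hLint : IntervalIntegrable L volume δ (1/2) := by
      have hinv : IntervalIntegrable (fun θ : ℝ => θ⁻¹) volume δ (1/2) := by
        apply ContinuousOn.intervalIntegrable
        apply ContinuousOn.inv₀ continuousOn_id
        intro x hx
        rw [Set.uIcc_of_le hδhalf.le] at hx
        exact (lt_of_lt_of_le hδpos hx.1).ne'
      exact hinv.const_mul _
    have hIntL : IntegrableOn L (Set.Ioc δ (1/2:ℝ)) := hLint.1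
    have hpoint : ∀ θ ∈ Set.Ioc δ (1/2:ℝ), L θ ≤ S θ := by
      intro θ hθ
      have hθδ : δ < θ := hθ.1
      have hθ0 : 0 < θ := lt_trans hδpos hθδ
      have hθhalf : θ ≤ 1/2 := hθ.2
      have hD := D_pos hr0.le hr1 θ
      have hsin : θ/2 ≤ Real.sin θ := by
        have h := Real.sin_gt_sub_cube hθ0
        nlinarith [mul_pos hθ0 hθ0]
      have hsinpos : 0 < Real.sin θ := lt_of_lt_of_le (by linarith) hsin
      have hcosub : 1 - Real.cos θ ≤ θ^2/2 := by
        have := Real.one_sub_sq_div_two_le_cos (x := θ)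
        linarith
      have hDle : 1-2*r*Real.cos θ+r^2 ≤ 2*θ^2 := by
        nlinarith [sub_nonneg.mpr (Real.cos_le_one θ), hr1.le, hθδ, hδpos]
      have hs2 : L θ ≤ 4*(r*Real.sin θ) / ((K+1)*(1-2*r*Real.cos θ+r^2)) := by
        show (2*(K+1))⁻¹ * θ⁻¹ ≤ 4*(r*Real.sin θ) / ((K+1)*(1-2*r*Real.cos θ+r^2))
        rw [show (2*(K+1))⁻¹ * θ⁻¹ = 1/(2*(K+1)*θ) by rw [one_div, ← mul_inv]]
        rw [div_le_div_iff₀ (by positivity) (mul_pos hK1 hD)]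
        have hD8 : 1-2*r*Real.cos θ+r^2 ≤ 8*r*θ*Real.sin θ := by
          have h1 : θ/2 * (1/2) ≤ Real.sin θ * r := by
            apply mul_le_mul hsin hrhalf (by norm_num) hsinpos.le
          have h2 := mul_le_mul_of_nonneg_left h1 (by positivity : (0:ℝ) ≤ 8*θ)
          nlinarith [hDle]
        calc 1 * ((K+1)*(1-2*r*Real.cos θ+r^2))
            = (K+1)*(1-2*r*Real.cos θ+r^2) := one_mul _
          _ ≤ (K+1)*(8*r*θ*Real.sin θ) := mul_le_mul_of_nonneg_left hD8 hK1.le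
          _ = 4*(r*Real.sin θ) * (2*(K+1)*θ) := by ring
      have hs1 : 4*(r*Real.sin θ) / ((K+1)*(1-2*r*Real.cos θ+r^2)) ≤ S θ := by
        rw [hS]
        calc 4*(r*Real.sin θ) / ((K+1)*(1-2*r*Real.cos θ+r^2))
            ≤ |4*(r*Real.sin θ) / ((K+1)*(1-2*r*Real.cos θ+r^2))| := le_abs_self _
          _ = Real.sqrt ((4*(r*Real.sin θ) / ((K+1)*(1-2*r*Real.cos θ+r^2)))^2) :=
              (Real.sqrt_sq_eq_abs _).symm
          _ ≤ _ := Real.sqrt_le_sqrt (le_add_of_nonneg_left (sq_nonneg _))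
      exact le_trans hs2 hs1
    have hmono2 : ∫ θ in Set.Ioc δ (1/2:ℝ), L θ ≤ ∫ θ in Set.Ioc δ (1/2:ℝ), S θ :=
      setIntegral_mono_on hIntL (hIntS.mono_set hsub) measurableSet_Ioc hpoint
    have hcalc : ∫ θ in Set.Ioc δ (1/2:ℝ), L θ
        = (2*(K+1))⁻¹ * (Real.log (1/2) - Real.log δ) := by
      rw [← intervalIntegral.integral_of_le hδhalf.le]
      simp only [hL]
      rw [intervalIntegral.integral_const_mul,
        integral_inv (Set.notMem_uIcc_of_lt hδpos (by norm_num)),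
        Real.log_div (by norm_num) hδpos.ne']
    have hlogδ : Real.log δ = -(2*(K+1)*(|C|+1) + 2) := by rw [hδdef, Real.log_exp]
    have hfinal : (2*(K+1))⁻¹ * (Real.log (1/2) - Real.log δ) ≤ C := by
      rw [← hcalc]
      exact le_trans hmono2 (le_trans hmono1 hkey2)
    rw [hlogδ, show Real.log (1/2) = - Real.log 2 by rw [one_div, Real.log_inv]] at hfinal
    have hml := mul_le_mul_of_nonneg_left hfinal h2K.le
    rw [← mul_assoc, mul_inv_cancel₀ h2K.ne', one_mul] at hml
    nlinarith [mul_le_mul_of_nonneg_left (le_abs_self C) h2K.le, Real.log_two_lt_d9, hCabs, hK]
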